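/- Suppose K_{σ,ε} ≠ K and let f : V → K/K_{σ,ε} be a map. If φ and φ' are (σ,ε)-sesquilinear forms on V such that f(x+y) = f(x) + f(y) + π(φ(x,y)) and f(x+y) = f(x) + f(y) + π(φ'(x,y)) for all x, y ∈ V, where π : K → K/K_{σ,ε} is the quotient map of additive groups, then φ = φ'. In other words, the sesquilinearization of a (σ,ε)-pseudoquadratic form is uniquely determined by the form. -/

import Mathlib

open MulOpposite

variable {K : Type*} [DivisionRing K]

/-- `σ` is an anti-automorphism of the division ring `K`. -/
def IsAntiAuto (σ : K → K) : Prop :=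
  Function.Bijective σ ∧ (∀ a b : K, σ (a + b) = σ a + σ b) ∧
    ∀ a b : K, σ (a * b) = σ b * σ a

/-- `(σ, ε)` is an admissible pair: `σ` is an anti-automorphism, `ε ≠ 0`,
`σ ε = ε⁻¹` and `σ ∘ σ` is conjugation by `ε`. -/
def IsAdmissiblePair (σ : K → K) (ε : K) : Prop :=
  IsAntiAuto σ ∧ ε ≠ 0 ∧ σ ε = ε⁻¹ ∧ ∀ t : K, σ (σ t) = ε * t * ε⁻¹

variable {V : Type*} [AddCommGroup V] [Module Kᵐᵒᵖ V]

/-- `φ` is a reflexive `(σ, ε)`-sesquilinear form on the right `K`-vector space `V`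
(a right `K`-vector space is a left `Kᵐᵒᵖ`-vector space; right scalar multiplication
of `x` by `α` is `op α • x`). -/
def IsSesq (σ : K → K) (ε : K) (φ : V → V → K) : Prop :=
  (∀ x y z : V, φ (x + y) z = φ x z + φ y z) ∧
  (∀ x y z : V, φ x (y + z) = φ x y + φ x z) ∧
  (∀ (α : K) (x y : V), φ (op α • x) y = σ α * φ x y) ∧
  (∀ (β : K) (x y : V), φ x (op β • y) = φ x y * β) ∧
  ∀ x y : V, φ y x = σ (φ x y) * ε

/-- A subspace `S` of `V` is totally isotropic for `φ` if `φ` vanishes identically on it. -/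
def IsTotIso (φ : V → V → K) (S : Submodule Kᵐᵒᵖ V) : Prop :=
  ∀ x ∈ S, ∀ y ∈ S, φ x y = 0

/-- A maximal totally isotropic subspace: totally isotropic and maximal under inclusion
among totally isotropic subspaces. -/
def IsMaxTotIso (φ : V → V → K) (S : Submodule Kᵐᵒᵖ V) : Prop :=
  IsTotIso φ S ∧ ∀ T : Submodule Kᵐᵒᵖ V, IsTotIso φ T → S ≤ T → T = S

/-- `φ` is trace-valued: every `φ(x,x)` is of the form `t + σ(t)ε`. -/
def IsTraceValued (σ : K → K) (ε : K) (φ : V → V → K) : Prop :=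
  ∀ x : V, ∃ t : K, φ x x = t + σ t * ε

/-- The additive subgroup `K_{σ,ε} = {t − σ(t)ε : t ∈ K}` of `K`. -/
def Ksub (σ : K → K) (ε : K) (hσ : ∀ a b : K, σ (a + b) = σ a + σ b) :
    AddSubgroup K where
  carrier := {s : K | ∃ t : K, s = t - σ t * ε}
  zero_mem' := by
    refine ⟨0, ?_⟩
    have h := hσ 0 0
    rw [add_zero] at h
    have h0 : σ 0 = 0 := left_eq_add.mp h
    simp [h0]
  add_mem' := by
    rintro a b ⟨t, rfl⟩ ⟨s, rfl⟩
    refine ⟨t + s, ?_⟩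
    rw [hσ, add_mul]
    abel
  neg_mem' := by
    rintro a ⟨t, rfl⟩
    refine ⟨-t, ?_⟩
    have h := hσ 0 0
    rw [add_zero] at h
    have h0 : σ 0 = 0 := left_eq_add.mp h
    have h1 : σ t + σ (-t) = 0 := by
      rw [← hσ t (-t), add_neg_cancel, h0]
    have hneg : σ (-t) = -σ t := (neg_eq_of_add_eq_zero_right h1).symm
    rw [hneg, neg_mul, sub_neg_eq_add]
    abel

/-- If `K_{σ,ε} ≠ K`, then the sesquilinearization of a pseudoquadratic
form is uniquely determined: if `f : V → K/K_{σ,ε}` satisfies the cocycle identity with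
respect to two `(σ,ε)`-sesquilinear forms `φ` and `φ'`, then `φ = φ'`. -/
theorem stmt_16 (σ : K → K) (ε : K) (hpair : IsAdmissiblePair σ ε)
    (hσadd : ∀ a b : K, σ (a + b) = σ a + σ b)
    (hne : (Ksub σ ε hσadd : Set K) ≠ Set.univ)
    (f : V → K ⧸ Ksub σ ε hσadd)
    (φ φ' : V → V → K) (hφ : IsSesq σ ε φ) (hφ' : IsSesq σ ε φ')
    (h1 : ∀ x y : V,
      f (x + y) = f x + f y + QuotientAddGroup.mk' (Ksub σ ε hσadd) (φ x y))
    (h2 : ∀ x y : V,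
      f (x + y) = f x + f y + QuotientAddGroup.mk' (Ksub σ ε hσadd) (φ' x y)) :
    φ = φ' := by
  have hmem : ∀ x y : V, φ x y - φ' x y ∈ Ksub σ ε hσadd := by
    intro x y
    have := (h1 x y).symm.trans (h2 x y)
    have h := add_left_cancel this
    rw [← sub_eq_zero, ← map_sub] at h
    exact (QuotientAddGroup.eq_zero_iff _).mp h
  funext x y
  by_contra hc
  have hc' : φ x y - φ' x y ≠ 0 := sub_ne_zero.mpr hc
  apply hne
  apply Set.eq_univ_of_forall
  intro k
  have := hmem x (op ((φ x y - φ' x y)⁻¹ * k) • y)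
  rw [hφ.2.2.2.1, hφ'.2.2.2.1, ← sub_mul, ← mul_assoc,
    mul_inv_cancel₀ hc', one_mul] at this
  exact this
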